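/- Let m ≥ 2 be an integer and let x_1 ≥ x_2 ≥ ⋯ ≥ x_m ≥ 0 be reals with total sum t = Σ_{i=1}^m x_i. Then Σ_{1 ≤ i < j ≤ m} x_i x_j² ≤ (t/2)³. -/

import Mathlib

/-- `S n x = Σ_{1 ≤ i < j ≤ n} x_i · x_j²` for real sequences indexed from 1. -/
def SpolyR (n : ℕ) (x : ℕ → ℝ) : ℝ :=
  ∑ i ∈ Finset.Icc 1 n, ∑ j ∈ Finset.Icc 1 n, if i < j then x i * x j ^ 2 else 0

/-- For an integer `m ≥ 2` and reals `x_1 ≥ ⋯ ≥ x_m ≥ 0` with total sum `t`,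
`Σ_{1 ≤ i < j ≤ m} x_i x_j² ≤ (t/2)³`. -/
theorem stmt_12 (m : ℕ) (hm : 2 ≤ m) (x : ℕ → ℝ)
    (hdec : ∀ i, 1 ≤ i → i < m → x (i + 1) ≤ x i) (hpos : 0 ≤ x m)
    (t : ℝ) (ht : t = ∑ i ∈ Finset.Icc 1 m, x i) :
    SpolyR m x ≤ (t / 2) ^ 3 := by
  set s := Finset.Icc 1 m with hs
  have mono : ∀ j i, 1 ≤ i → i ≤ j → j ≤ m → x j ≤ x i := by
    intro j
    induction j with
    | zero => intro i h1 h2 _; omega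
    | succ k ih =>
      intro i h1 h2 h3
      rcases Nat.eq_or_lt_of_le h2 with h | h
      · rw [h]
      · exact (hdec k (by omega) (by omega)).trans (ih i h1 (by omega) (by omega))
  have hnn : ∀ i ∈ s, 0 ≤ x i := by
    intro i hi
    simp only [hs, Finset.mem_Icc] at hi
    exact le_trans hpos (mono m i hi.1 hi.2 le_rfl)
  have hle : ∀ i ∈ s, ∀ j ∈ s, i < j → x j ≤ x i := by
    intro i hi j hj hij
    simp only [hs, Finset.mem_Icc] at hi hj
    exact mono j i hi.1 (le_of_lt hij) hj.2
  have step1 : SpolyR m x ≤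
      ∑ i ∈ s, ∑ j ∈ s, (if i < j then (x i ^ 2 * x j + x i * x j ^ 2) / 2 else 0) := by
    unfold SpolyR
    apply Finset.sum_le_sum
    intro i hi
    apply Finset.sum_le_sum
    intro j hj
    by_cases h : i < j
    · simp only [h, if_true]
      have h1 := hnn i hi
      have h2 := hnn j hj
      have h3 := hle i hi j hj h
      nlinarith [mul_nonneg (mul_nonneg h1 h2) (sub_nonneg.mpr h3)]
    · simp [h]
  have ite_add : ∀ (p : Prop) [Decidable p] (u v : ℝ),
      (if p then (u + v) / 2 else 0) = (if p then u else 0) / 2 + (if p then v else 0) / 2 := by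
    intro p _ u v; split <;> ring
  have step2 : ∑ i ∈ s, ∑ j ∈ s, (if i < j then (x i ^ 2 * x j + x i * x j ^ 2) / 2 else 0)
      = (∑ i ∈ s, (x i ^ 2 * t - x i ^ 3)) / 2 := by
    simp_rw [ite_add, Finset.sum_add_distrib, ← Finset.sum_div]
    have hB : ∑ i ∈ s, ∑ j ∈ s, (if i < j then x i * x j ^ 2 else 0)
        = ∑ i ∈ s, ∑ j ∈ s, (if j < i then x j * x i ^ 2 else 0) := Finset.sum_comm
    rw [hB, ← add_div, ← Finset.sum_add_distrib]
    simp_rw [← Finset.sum_add_distrib]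
    congr 1
    apply Finset.sum_congr rfl
    intro i hi
    have : ∀ j ∈ s, (if i < j then x i ^ 2 * x j else 0) + (if j < i then x j * x i ^ 2 else 0)
        = x i ^ 2 * x j - (if i = j then x i ^ 2 * x j else 0) := by
      intro j hj
      rcases lt_trichotomy i j with h | h | h
      · simp [h, not_lt.mpr (le_of_lt h), ne_of_lt h]
      · simp [h]
      · simp only [not_lt.mpr (le_of_lt h), if_false, if_pos h, (ne_of_gt h)]
        simp [ne_of_gt h]
        ring
    rw [Finset.sum_congr rfl this, Finset.sum_sub_distrib, ← Finset.mul_sum, ← ht,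
      Finset.sum_ite_eq s i (fun j => x i ^ 2 * x j), if_pos hi]
    ring
  have step3 : (∑ i ∈ s, (x i ^ 2 * t - x i ^ 3)) / 2 ≤ (∑ i ∈ s, x i * (t ^ 2 / 4)) / 2 := by
    apply div_le_div_of_nonneg_right ?_ (by norm_num)
    apply Finset.sum_le_sum
    intro i hi
    have h1 := hnn i hi
    nlinarith [mul_nonneg h1 (sq_nonneg (t / 2 - x i))]
  have : (∑ i ∈ s, x i * (t ^ 2 / 4)) / 2 = (t / 2) ^ 3 := by
    rw [← Finset.sum_mul, ← ht]
    ring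
  linarith [step1, step2.le, step3]
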